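/- Let p_1, p_2, p_3 be three distinct prime numbers and let (X, r) be an indecomposable involutive non-degenerate set-theoretic solution of the Yang–Baxter equation with |X| = p_1p_2p_3 which is a multipermutation solution of multipermutation level 3. Then |𝒢(X,r)| > p_1p_2p_3. -/

import Mathlib

open Equiv Pointwise

universe u v

/-- An involutive non-degenerate set-theoretic solution of the Yang–Baxter equation on `X`,
presented by its family of bijections `σ x` (`x ∈ X`), subject to the condition
`σ_x ∘ σ_{σ_x⁻¹(y)} = σ_y ∘ σ_{σ_y⁻¹(x)}`; the solution itself is recovered as
`r (x, y) = (σ x y, (σ (σ x y))⁻¹ x)`. -/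
structure YBE (X : Type u) where
  σ : X → Equiv.Perm X
  ybe : ∀ x y : X, σ x * σ ((σ x)⁻¹ y) = σ y * σ ((σ y)⁻¹ x)

namespace YBE

variable {X : Type u} {Y : Type v}

/-- The permutation group `𝒢(X,r)` of a solution. -/
def permGroup (S : YBE X) : Subgroup (Equiv.Perm X) :=
  Subgroup.closure (Set.range S.σ)

/-- `(X,r)` is indecomposable if `𝒢(X,r)` acts transitively on `X`. -/
def Indecomposable (S : YBE X) : Prop :=
  ∀ x y : X, ∃ g ∈ S.permGroup, g x = y

/-- Homomorphism of solutions. -/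
def IsHom (S : YBE X) (T : YBE Y) (f : X → Y) : Prop :=
  ∀ x y : X, f (S.σ x y) = T.σ (f x) (f y)

/-- `T` is (a copy of) the retract `Ret(X,r)` of `S`: there is a surjective homomorphism
of solutions identifying points with equal `σ`'s, and only those. -/
def IsRetract (S : YBE X) (T : YBE Y) : Prop :=
  ∃ f : X → Y, Function.Surjective f ∧ S.IsHom T f ∧
    ∀ x x' : X, f x = f x' ↔ S.σ x = S.σ x'

/-- `Retⁿ(X,r)` has cardinality one, i.e. the multipermutation level is at most `n`. -/
def MPLevelLE : ℕ → (X : Type u) → YBE X → Prop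
  | 0, X, _ => Nonempty X ∧ Subsingleton X
  | n + 1, _, S => ∃ (Z : Type u) (T : YBE Z), S.IsRetract T ∧ MPLevelLE n Z T

/-- `(X,r)` is a multipermutation solution: `Retⁿ(X,r)` has cardinality one
for some positive integer `n`. -/
def IsMultipermutation (S : YBE X) : Prop :=
  ∃ n : ℕ, 0 < n ∧ MPLevelLE n X S

/-- `m` is the multipermutation level of `(X,r)`: it is the least positive integer
with `|Retᵐ(X,r)| = 1`. -/
def MPLevelExact (S : YBE X) (m : ℕ) : Prop :=
  0 < m ∧ MPLevelLE m X S ∧ ∀ k : ℕ, 0 < k → MPLevelLE k X S → m ≤ k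

/-- A simple solution: `|X| > 1` and every epimorphic image is either an isomorphic copy
or a singleton. -/
def IsSimple (S : YBE X) : Prop :=
  1 < Nat.card X ∧ ∀ (Z : Type u) (T : YBE Z) (f : X → Z),
    S.IsHom T f → Function.Surjective f → (Function.Bijective f ∨ Nat.card Z = 1)

end YBE

/-- The orbit `H(x) = {t(x) : t ∈ H}` of `x ∈ X` under a subgroup `H` of a permutation
group `G ≤ Sym(X)`. -/
def orbIn {X : Type u} {G : Subgroup (Equiv.Perm X)} (H : Subgroup ↥G) (x : X) : Set X :=
  {y | ∃ t : ↥G, t ∈ H ∧ (t : Equiv.Perm X) x = y}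

/-- The "orbit" `A(x) = {t(x) : t ∈ A}` of `x ∈ X` under a subset `A` of a permutation
group `G ≤ Sym(X)`. -/
def orbSet {X : Type u} {G : Subgroup (Equiv.Perm X)} (A : Set ↥G) (x : X) : Set X :=
  {y | ∃ t ∈ A, ((t : Equiv.Perm X)) x = y}

/-- A left-brace structure on a group `G`: an abelian group operation `add` (whose neutral
element is `1`) satisfying the brace compatibility `a∘(b+c) + a = a∘b + a∘c`, where `∘` is the
given group operation of `G`.  In other words, this makes `G` a left brace whose
multiplicative group is `G`. -/
structure BraceOps (G : Type*) [Group G] where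
  add : G → G → G
  neg : G → G
  add_assoc : ∀ a b c, add (add a b) c = add a (add b c)
  add_comm : ∀ a b, add a b = add b a
  zero_add : ∀ a, add 1 a = a
  neg_add_cancel : ∀ a, add (neg a) a = 1
  compat : ∀ a b c, add (a * add b c) a = add (a * b) (a * c)

namespace BraceOps

variable {G : Type*} [Group G]

/-- The lambda map `λ_a(b) = -a + a∘b` of a left brace. -/
def lam (β : BraceOps G) (a b : G) : G :=
  β.add (β.neg a) (a * b)

/-- Natural multiples with respect to the additive structure of the brace. -/
def nsmul (β : BraceOps G) : ℕ → G → G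
  | 0, _ => 1
  | n + 1, a => β.add a (β.nsmul n a)

/-- The socle `Soc(B) = {a : a∘b = a + b for all b}` of a left brace. -/
def socle (β : BraceOps G) : Set G :=
  {a | ∀ b : G, a * b = β.add a b}

/-- The Sylow `q`-subgroup (i.e. the `q`-primary component) of the additive group of a
finite left brace. -/
def addSylow (β : BraceOps G) (q : ℕ) : Set G :=
  {a | ∃ k : ℕ, β.nsmul (q ^ k) a = 1}

/-- `A` is a subgroup of the additive group of the brace. -/
def IsAddSubgroup (β : BraceOps G) (A : Set G) : Prop :=
  1 ∈ A ∧ (∀ a ∈ A, ∀ b ∈ A, β.add a b ∈ A) ∧ ∀ a ∈ A, β.neg a ∈ A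

/-- A left ideal of a left brace: an additive subgroup stable under all `λ_a`. -/
def IsLeftIdeal (β : BraceOps G) (L : Set G) : Prop :=
  β.IsAddSubgroup L ∧ ∀ a : G, ∀ b ∈ L, β.lam a b ∈ L

/-- An ideal of a left brace: a normal subgroup of the multiplicative group stable
under all `λ_a`. -/
def IsIdeal (β : BraceOps G) (I : Set G) : Prop :=
  1 ∈ I ∧ (∀ a ∈ I, ∀ b ∈ I, a * b ∈ I) ∧ (∀ a ∈ I, a⁻¹ ∈ I) ∧
    (∀ g : G, ∀ a ∈ I, g * a * g⁻¹ ∈ I) ∧ ∀ g : G, ∀ a ∈ I, β.lam g a ∈ I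

end BraceOps

namespace YBE

variable {X : Type u}

/-- `σ x` as an element of `𝒢(X,r)`. -/
def σg (S : YBE X) (x : X) : ↥S.permGroup :=
  ⟨S.σ x, Subgroup.subset_closure (Set.mem_range_self x)⟩

/-- The natural left-brace structure on `𝒢(X,r)`: the unique left brace structure whose
multiplicative group is `𝒢(X,r)`, whose additive group is generated by `{σ_x : x ∈ X}`,
and whose lambda map satisfies `λ_g(σ_y) = σ_{g(y)}`. -/
structure IsNaturalBrace (S : YBE X) (β : BraceOps ↥S.permGroup) : Prop where
  lam_sigma : ∀ (g : ↥S.permGroup) (y : X),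
    β.lam g (S.σg y) = S.σg ((g : Equiv.Perm X) y)
  add_gen : ∀ A : Set ↥S.permGroup, β.IsAddSubgroup A → (∀ x : X, S.σg x ∈ A) →
    ∀ g : ↥S.permGroup, g ∈ A

/-- The product `P_{τ(1)} P_{τ(2)} ⋯ P_{τ(i)}` of Sylow subgroups of the additive group of
the left brace `𝒢(X,r)`, taken inside the multiplicative group. -/
def sylProdTake (S : YBE X) (β : BraceOps ↥S.permGroup) {n : ℕ} (p : Fin n → ℕ)
    (τ : Equiv.Perm (Fin n)) (i : ℕ) : Set ↥S.permGroup :=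
  ((List.ofFn fun j : Fin n => β.addSylow (p (τ j))).take i).prod

/-- The product `P_{i+1} P_{i+2} ⋯ P_n` of Sylow subgroups of the additive group of the
left brace `𝒢(X,r)`, taken inside the multiplicative group. -/
def sylProdDrop (S : YBE X) (β : BraceOps ↥S.permGroup) {n : ℕ} (p : Fin n → ℕ)
    (i : ℕ) : Set ↥S.permGroup :=
  ((List.ofFn fun j : Fin n => β.addSylow (p j)).drop i).prod

end YBE

/-- The holomorph `ℤ/(q) ⋊ Aut(ℤ/(q))` of the cyclic group of order `q`. -/
abbrev Hol (q : ℕ) :=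
  SemidirectProduct (Multiplicative (ZMod q)) (MulAut (Multiplicative (ZMod q)))
    (MonoidHom.id (MulAut (Multiplicative (ZMod q))))

/-- Kronecker delta `δ_{u,w} ∈ ℤ/(q)`. -/
noncomputable def kdelta (q : ℕ) {α : Type v} (u w : α) : ZMod q :=
  letI := Classical.propDecidable (u = w)
  if u = w then 1 else 0

/-- The map `σ'_{(a,x)}(b,y) = (b + δ_{x,σ_x(y)}, σ_x(y))` on `ℤ/(q) × Y`. -/
noncomputable def extMap {Y : Type v} (T : YBE Y) (q : ℕ) (a b : ZMod q × Y) :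
    ZMod q × Y :=
  (b.1 + kdelta q a.2 (T.σ a.2 b.2), T.σ a.2 b.2)

section Generic

lemma closure_commute {γ : Type*} [Group γ] {s : Set γ}
    (hs : ∀ a ∈ s, ∀ b ∈ s, Commute a b) :
    ∀ x ∈ Subgroup.closure s, ∀ y ∈ Subgroup.closure s, Commute x y := by
  intro x hx
  induction hx using Subgroup.closure_induction with
  | mem a ha =>
    intro y hy
    induction hy using Subgroup.closure_induction with
    | mem b hb => exact hs a ha b hb
    | one => exact Commute.one_right a
    | mul u v hu hv ihu ihv => exact Commute.mul_right ihu ihv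
    | inv u hu ihu => exact Commute.inv_right ihu
  | one => exact fun y _ => Commute.one_left y
  | mul u v hu hv ihu ihv => exact fun y hy => Commute.mul_left (ihu y hy) (ihv y hy)
  | inv u hu ihu => exact fun y hy => Commute.inv_left (ihu y hy)

theorem Equiv.Perm.inv_apply_self {α : Type*} (e : Equiv.Perm α) (x : α) : e⁻¹ (e x) = x :=
  e.symm_apply_apply x

theorem Equiv.Perm.apply_inv_self {α : Type*} (e : Equiv.Perm α) (x : α) : e (e⁻¹ x) = x :=
  e.apply_symm_apply x

lemma perm_zpow_fixed {α : Type*} (e : Equiv.Perm α) (x : α) (h : e x = x) :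
    ∀ k : ℤ, (e ^ k) x = x := by
  have hn : ∀ m : ℕ, (e ^ m) x = x := by
    intro m
    induction m with
    | zero => rfl
    | succ m ih => rw [pow_succ, Equiv.Perm.mul_apply, h, ih]
  intro k
  cases k with
  | ofNat m => simpa using hn m
  | negSucc m =>
    have h1 : (e ^ (m + 1)) x = x := hn (m + 1)
    have h2 : (e ^ (m + 1))⁻¹ x = x := by
      conv_lhs => rw [← h1]
      exact Equiv.Perm.inv_apply_self _ _
    simpa [zpow_negSucc] using h2

/-- All additive endomorphisms of a finite abelian group of squarefree order commute. -/
lemma addEndo_comm {A : Type*} [AddCommGroup A] [Finite A]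
    (hsq : Squarefree (Nat.card A)) (f g : A →+ A) (x : A) : f (g x) = g (f x) := by
  haveI : Finite (Multiplicative A) := Finite.of_equiv A Multiplicative.ofAdd
  have hcardM : Nat.card (Multiplicative A) = Nat.card A :=
    Nat.card_congr Multiplicative.toAdd
  have hNne : Nat.card A ≠ 0 := hsq.ne_zero
  -- the multiplicative version is cyclic
  have hdvd1 : Nat.card A ∣ Monoid.exponent (Multiplicative A) := by
    rw [← Nat.prod_primeFactors_of_squarefree hsq]
    apply Finset.prod_primes_dvd
    · intro q hq
      exact (Nat.prime_of_mem_primeFactors hq).prime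
    · intro q hq
      haveI : Fact q.Prime := ⟨Nat.prime_of_mem_primeFactors hq⟩
      letI := Fintype.ofFinite (Multiplicative A)
      have hqd : q ∣ Fintype.card (Multiplicative A) := by
        rw [← Nat.card_eq_fintype_card, hcardM]
        exact Nat.dvd_of_mem_primeFactors hq
      obtain ⟨y, hy⟩ := exists_prime_orderOf_dvd_card q hqd
      rw [← hy]
      exact Monoid.order_dvd_exponent y
  have hdvd2 : Monoid.exponent (Multiplicative A) ∣ Nat.card A := by
    apply Monoid.exponent_dvd_of_forall_pow_eq_one
    intro y
    rw [← hcardM]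
    exact pow_card_eq_one'
  have hexp : Monoid.exponent (Multiplicative A) = Nat.card A :=
    Nat.dvd_antisymm hdvd2 hdvd1
  obtain ⟨y₀, hy₀⟩ := Monoid.exists_orderOf_eq_exponent (G := Multiplicative A)
    Monoid.ExponentExists.of_finite
  haveI : IsCyclic (Multiplicative A) :=
    isCyclic_of_orderOf_eq_card y₀ (by rw [hy₀, hexp, hcardM])
  obtain ⟨gen, hgen⟩ := IsCyclic.exists_generator (α := Multiplicative A)
  set e : A := Multiplicative.toAdd gen with he
  have hgen' : ∀ a : A, ∃ k : ℤ, k • e = a := by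
    intro a
    obtain ⟨k, hk⟩ := Subgroup.mem_zpowers_iff.mp (hgen (Multiplicative.ofAdd a))
    refine ⟨k, ?_⟩
    have := congrArg (Multiplicative.toAdd) hk
    rwa [toAdd_zpow] at this
  obtain ⟨k, rfl⟩ := hgen' x
  obtain ⟨m, hm⟩ := hgen' (g e)
  obtain ⟨l, hl⟩ := hgen' (f e)
  have key : f (g e) = g (f e) := by
    rw [← hm, ← hl, AddMonoidHom.map_zsmul, AddMonoidHom.map_zsmul, ← hm, ← hl,
      smul_smul, smul_smul, mul_comm]
  rw [AddMonoidHom.map_zsmul, AddMonoidHom.map_zsmul, AddMonoidHom.map_zsmul,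
    AddMonoidHom.map_zsmul, key]

lemma card_eq_of_abelian_transitive {α : Type*} [Finite α] [Nonempty α]
    (G : Subgroup (Equiv.Perm α))
    (hab : ∀ a b : ↥G, a * b = b * a)
    (htr : ∀ x y : α, ∃ g : ↥G, ((g : Equiv.Perm α)) x = y) :
    Nat.card ↥G = Nat.card α := by
  obtain ⟨x₀⟩ := ‹Nonempty α›
  apply Nat.card_eq_of_bijective (fun g : ↥G => ((g : Equiv.Perm α)) x₀)
  constructor
  · intro g g' h
    simp only at h
    apply Subtype.ext
    apply Equiv.ext
    intro y
    obtain ⟨hh, hhy⟩ := htr x₀ y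
    calc ((g : Equiv.Perm α)) y = ((g : Equiv.Perm α)) (((hh : Equiv.Perm α)) x₀) := by rw [hhy]
      _ = (((g * hh : ↥G) : Equiv.Perm α)) x₀ := rfl
      _ = (((hh * g : ↥G) : Equiv.Perm α)) x₀ := by rw [hab]
      _ = ((hh : Equiv.Perm α)) (((g : Equiv.Perm α)) x₀) := rfl
      _ = ((hh : Equiv.Perm α)) (((g' : Equiv.Perm α)) x₀) := by rw [h]
      _ = (((hh * g' : ↥G) : Equiv.Perm α)) x₀ := rfl
      _ = (((g' * hh : ↥G) : Equiv.Perm α)) x₀ := by rw [hab]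
      _ = ((g' : Equiv.Perm α)) y := by rw [show (((g' * hh : ↥G) : Equiv.Perm α)) x₀ = ((g' : Equiv.Perm α)) (((hh : Equiv.Perm α)) x₀) from rfl, hhy]
  · intro y
    obtain ⟨g, hg⟩ := htr x₀ y
    exact ⟨g, hg⟩

/-- If `b` properly divides `a`, `a` properly divides a product of three primes,
and `2 ≤ b`, then `b` is prime. -/
lemma three_primes_chain {q0 q1 q2 a b : ℕ} (h0 : q0.Prime) (h1 : q1.Prime) (h2 : q2.Prime)
    (hab : b ∣ a) (haN : a ∣ q0 * q1 * q2) (hsqN : Squarefree (q0 * q1 * q2))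
    (hb2 : 2 ≤ b) (hba : b ≠ a) (haNne : a ≠ q0 * q1 * q2) : b.Prime := by
  have hNne : q0 * q1 * q2 ≠ 0 := hsqN.ne_zero
  have hane : a ≠ 0 := fun h => hNne (Nat.eq_zero_of_zero_dvd (h ▸ haN))
  have hbne : b ≠ 0 := fun h => (by omega)
  have hsqa : Squarefree a := Squarefree.squarefree_of_dvd haN hsqN
  have hsqb : Squarefree b := Squarefree.squarefree_of_dvd hab hsqa
  by_contra hnp
  -- b has at least two distinct prime factors
  have hb_card : 2 ≤ b.primeFactors.card := by
    by_contra hlt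
    push_neg at hlt
    interval_cases h : b.primeFactors.card
    · have : b = 1 := by
        have hne : ¬ b.primeFactors.Nonempty := by
          rw [Finset.nonempty_iff_ne_empty]
          intro hne'
          have := Finset.card_pos.mpr (Finset.nonempty_iff_ne_empty.mpr hne')
          omega
        have := Nat.nonempty_primeFactors.not.mp hne
        omega
      omega
    · obtain ⟨q, hq⟩ := Finset.card_eq_one.mp h
      have : b = q := by
        have := Nat.prod_primeFactors_of_squarefree hsqb
        rw [hq, Finset.prod_singleton] at this
        omega
      exact hnp (this ▸ Nat.prime_of_mem_primeFactors (hq ▸ Finset.mem_singleton_self q))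
  -- a = b * c with c ≥ 2 coprime to b
  obtain ⟨c, rfl⟩ := hab
  have hcne : c ≠ 0 := by rintro rfl; exact hane (mul_zero b)
  have hc1 : c ≠ 1 := by rintro rfl; exact hba (mul_one b).symm
  have hco : b.Coprime c := (Nat.squarefree_mul_iff.mp hsqa).1
  have hc_card : 1 ≤ c.primeFactors.card := by
    rw [Nat.succ_le_iff, Finset.card_pos, Nat.nonempty_primeFactors]
    omega
  have hdisj : Disjoint b.primeFactors c.primeFactors := hco.disjoint_primeFactors
  have ha_card : 3 ≤ (b * c).primeFactors.card := by
    rw [Nat.primeFactors_mul hbne hcne, Finset.card_union_of_disjoint hdisj]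
    omega
  -- N has exactly 3 prime factors
  have hNfac : (q0 * q1 * q2).primeFactors = {q0, q1, q2} := by
    rw [Nat.primeFactors_mul (Nat.mul_ne_zero h0.ne_zero h1.ne_zero) h2.ne_zero, Nat.primeFactors_mul h0.ne_zero h1.ne_zero,
      h0.primeFactors, h1.primeFactors, h2.primeFactors]
    ext q
    simp [or_assoc]
  have hNcard : (q0 * q1 * q2).primeFactors.card ≤ 3 := by
    rw [hNfac]
    apply le_trans (Finset.card_insert_le _ _)
    have := Finset.card_insert_le q1 ({q2} : Finset ℕ)
    simp at this ⊢
    omega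
  have hsubset : (b * c).primeFactors ⊆ (q0 * q1 * q2).primeFactors :=
    Nat.primeFactors_mono haN hNne
  have heqset : (b * c).primeFactors = (q0 * q1 * q2).primeFactors :=
    Finset.eq_of_subset_of_card_le hsubset (by omega)
  apply haNne
  calc b * c = ∏ q ∈ (b * c).primeFactors, q := (Nat.prod_primeFactors_of_squarefree hsqa).symm
    _ = ∏ q ∈ (q0 * q1 * q2).primeFactors, q := by rw [heqset]
    _ = q0 * q1 * q2 := Nat.prod_primeFactors_of_squarefree hsqN

end Generic
namespace YBE

variable {X : Type u} (S : YBE X)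

lemma ybe_g (u v : X) :
    S.σg u * S.σg ((S.σ u)⁻¹ v) = S.σg v * S.σg ((S.σ v)⁻¹ u) :=
  Subtype.ext (S.ybe u v)

/-- The right translation `g ↦ g σ_{g⁻¹ z}` on `𝒢(X,r)`. -/
def Rm (z : X) : Function.End ↥S.permGroup :=
  fun g => g * S.σg (((g⁻¹ : ↥S.permGroup) : Equiv.Perm X) z)

lemma Rm_apply (z : X) (g : ↥S.permGroup) :
    S.Rm z g = g * S.σg (((g : Equiv.Perm X))⁻¹ z) := by
  simp [Rm]

lemma Rm_comm (z w : X) : S.Rm z * S.Rm w = S.Rm w * S.Rm z := by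
  funext g
  show S.Rm z (S.Rm w g) = S.Rm w (S.Rm z g)
  rw [Rm_apply, Rm_apply, Rm_apply, Rm_apply]
  set u := ((g : Equiv.Perm X))⁻¹ w with hu
  set v := ((g : Equiv.Perm X))⁻¹ z with hv
  have h1 : ((((g * S.σg u) : ↥S.permGroup) : Equiv.Perm X))⁻¹ z = (S.σ u)⁻¹ v := by
    simp [σg, mul_inv_rev, hv]
  have h2 : ((((g * S.σg v) : ↥S.permGroup) : Equiv.Perm X))⁻¹ w = (S.σ v)⁻¹ u := by
    simp [σg, mul_inv_rev, hu]
  rw [h1, h2, mul_assoc, mul_assoc, S.ybe_g u v]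

/-- The commutative monoid of maps generated by the `Rm z`. -/
def Mon : Submonoid (Function.End ↥S.permGroup) :=
  Submonoid.closure (Set.range S.Rm)

lemma Rm_mem_Mon (z : X) : S.Rm z ∈ S.Mon :=
  Submonoid.subset_closure (Set.mem_range_self z)

lemma Mon_comm_Rm {m : Function.End ↥S.permGroup} (hm : m ∈ S.Mon) (z : X) :
    m * S.Rm z = S.Rm z * m := by
  induction hm using Submonoid.closure_induction with
  | mem x hx => obtain ⟨w, rfl⟩ := hx; exact S.Rm_comm w z
  | one => rw [one_mul, mul_one]
  | mul x y hx hy ihx ihy => rw [mul_assoc, ihy, ← mul_assoc, ihx, mul_assoc]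

lemma Mon_comm {m m' : Function.End ↥S.permGroup} (hm : m ∈ S.Mon) (hm' : m' ∈ S.Mon) :
    m * m' = m' * m := by
  induction hm' using Submonoid.closure_induction with
  | mem x hx => obtain ⟨w, rfl⟩ := hx; exact S.Mon_comm_Rm hm w
  | one => rw [one_mul, mul_one]
  | mul x y hx hy ihx ihy => rw [← mul_assoc, ihx, mul_assoc, ihy, ← mul_assoc]

variable [Finite X]

lemma mem_sigma_monoid (g : ↥S.permGroup) :
    g ∈ Submonoid.closure (Set.range S.σg) := by
  have hinv : ∀ a : ↥S.permGroup, a ∈ Submonoid.closure (Set.range S.σg) →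
      a⁻¹ ∈ Submonoid.closure (Set.range S.σg) := by
    intro a ha
    have h1 : a * a ^ (orderOf a - 1) = 1 := by
      rw [← pow_succ', Nat.sub_add_cancel (orderOf_pos a)]
      exact pow_orderOf_eq_one a
    rw [inv_eq_of_mul_eq_one_right h1]
    exact pow_mem ha _
  let G' : Subgroup ↥S.permGroup :=
    { toSubmonoid := Submonoid.closure (Set.range S.σg),
      inv_mem' := fun {a} ha => hinv a ha }
  have key : ∀ (x : Equiv.Perm X) (hx : x ∈ Subgroup.closure (Set.range S.σ)),
      (⟨x, hx⟩ : ↥S.permGroup) ∈ G' := by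
    intro x hx
    induction hx using Subgroup.closure_induction with
    | mem y hy =>
      obtain ⟨x₀, rfl⟩ := hy
      exact Submonoid.subset_closure (Set.mem_range_self x₀)
    | one => exact one_mem G'
    | mul a b ha hb iha ihb => exact mul_mem iha ihb
    | inv a ha iha => exact inv_mem iha
  exact key g.1 g.2

lemma Mon_cancel {m m' : Function.End ↥S.permGroup} (hm : m ∈ S.Mon) (hm' : m' ∈ S.Mon)
    (g₀ : ↥S.permGroup) (h : m g₀ = m' g₀) : m = m' := by
  have main : ∀ a : ↥S.permGroup, a ∈ Submonoid.closure (Set.range S.σg) →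
      m (g₀ * a) = m' (g₀ * a) := by
    intro a ha
    induction ha using Submonoid.closure_induction_right with
    | one => rwa [mul_one]
    | mul_right x hx y hy ih =>
      obtain ⟨u, rfl⟩ := hy
      set g := g₀ * x with hg
      have hgu : g * S.σg u = S.Rm (((g : Equiv.Perm X)) u) g := by
        rw [Rm_apply]
        congr 2
        exact (Equiv.Perm.inv_apply_self _ _).symm
      rw [← mul_assoc, ← hg, hgu]
      have hcz : ∀ mm : Function.End ↥S.permGroup, mm ∈ S.Mon →
          mm (S.Rm (((g : Equiv.Perm X)) u) g) = S.Rm (((g : Equiv.Perm X)) u) (mm g) := by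
        intro mm hmm
        have := S.Mon_comm_Rm hmm (((g : Equiv.Perm X)) u)
        calc mm (S.Rm (((g : Equiv.Perm X)) u) g) = (mm * S.Rm (((g : Equiv.Perm X)) u)) g := rfl
          _ = (S.Rm (((g : Equiv.Perm X)) u) * mm) g := by rw [this]
          _ = S.Rm (((g : Equiv.Perm X)) u) (mm g) := rfl
      rw [hcz m hm, hcz m' hm', ih]
  funext g
  have := main (g₀⁻¹ * g) (S.mem_sigma_monoid _)
  rwa [mul_inv_cancel_left] at this

lemma ev_surj (g : ↥S.permGroup) : ∃ m ∈ S.Mon, m 1 = g := by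
  have : ∀ a : ↥S.permGroup, a ∈ Submonoid.closure (Set.range S.σg) →
      ∃ m ∈ S.Mon, m 1 = a := by
    intro a ha
    induction ha using Submonoid.closure_induction_right with
    | one => exact ⟨1, one_mem _, rfl⟩
    | mul_right x hx y hy ih =>
      obtain ⟨u, rfl⟩ := hy
      obtain ⟨m, hm, hev⟩ := ih
      refine ⟨S.Rm (((x : Equiv.Perm X)) u) * m, mul_mem (S.Rm_mem_Mon _) hm, ?_⟩
      show S.Rm (((x : Equiv.Perm X)) u) (m 1) = x * S.σg u
      rw [hev, Rm_apply]
      congr 2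
      exact Equiv.Perm.inv_apply_self _ _
  exact this g (S.mem_sigma_monoid g)

lemma Mon_inv {m : Function.End ↥S.permGroup} (hm : m ∈ S.Mon) :
    ∃ m', m' ∈ S.Mon ∧ m * m' = 1 ∧ m' * m = 1 := by
  haveI : Finite (Function.End ↥S.permGroup) :=
    (inferInstance : Finite (↥S.permGroup → ↥S.permGroup))
  have hinj : Function.Injective (fun x : ↥S.Mon => (⟨m * x.1, mul_mem hm x.2⟩ : ↥S.Mon)) := by
    intro x y hxy
    have h1 : m * x.1 = m * y.1 := congrArg Subtype.val hxy
    have h2 : x.1 * m = y.1 * m := by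
      rw [← S.Mon_comm hm x.2, ← S.Mon_comm hm y.2, h1]
    have h3 : x.1 (m 1) = y.1 (m 1) := by
      have := congrFun h2 (1 : ↥S.permGroup); exact this
    exact Subtype.ext (S.Mon_cancel x.2 y.2 (m 1) h3)
  have hsurj := Finite.surjective_of_injective hinj
  obtain ⟨x, hx⟩ := hsurj ⟨1, one_mem _⟩
  have hx1 : m * x.1 = 1 := congrArg Subtype.val hx
  exact ⟨x.1, x.2, hx1, by rw [S.Mon_comm x.2 hm]; exact hx1⟩

/-- Evaluation at `1` is a bijection from the commutative translation monoid to `𝒢(X,r)`. -/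
noncomputable def evE : ↥S.Mon ≃ ↥S.permGroup :=
  Equiv.ofBijective (fun m => m.1 1)
    ⟨fun a b h => Subtype.ext (S.Mon_cancel a.2 b.2 1 h),
     fun g => by obtain ⟨m, hm, hev⟩ := S.ev_surj g; exact ⟨⟨m, hm⟩, hev⟩⟩

/-- The additive operation of the natural brace structure on `𝒢(X,r)`. -/
noncomputable def badd (a b : ↥S.permGroup) : ↥S.permGroup :=
  (S.evE.symm a).1 b

/-- The additive negation of the natural brace structure on `𝒢(X,r)`. -/
noncomputable def bneg (a : ↥S.permGroup) : ↥S.permGroup :=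
  (Classical.choose (S.Mon_inv (S.evE.symm a).2)) 1

lemma badd_of_mem {m : Function.End ↥S.permGroup} (hm : m ∈ S.Mon) (b : ↥S.permGroup) :
    S.badd (m 1) b = m b := by
  have h : S.evE.symm (m 1) = ⟨m, hm⟩ := by
    rw [Equiv.symm_apply_eq]; rfl
  rw [badd, h]

lemma evE_symm_spec (a : ↥S.permGroup) : (S.evE.symm a).1 1 = a := by
  have := S.evE.apply_symm_apply a
  exact this

lemma badd_comm (a b : ↥S.permGroup) : S.badd a b = S.badd b a := by
  set m := S.evE.symm a with hm
  set m' := S.evE.symm b with hm'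
  have ha : m.1 1 = a := S.evE_symm_spec a
  have hb : m'.1 1 = b := S.evE_symm_spec b
  calc S.badd a b = m.1 b := by rw [badd]
    _ = m.1 (m'.1 1) := by rw [hb]
    _ = (m.1 * m'.1) 1 := rfl
    _ = (m'.1 * m.1) 1 := by rw [S.Mon_comm m.2 m'.2]
    _ = m'.1 (m.1 1) := rfl
    _ = S.badd b a := by rw [badd, ← hm', ha]

lemma badd_assoc (a b c : ↥S.permGroup) : S.badd (S.badd a b) c = S.badd a (S.badd b c) := by
  set m := S.evE.symm a with hm
  set m' := S.evE.symm b with hm'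
  have ha : m.1 1 = a := S.evE_symm_spec a
  have hb : m'.1 1 = b := S.evE_symm_spec b
  have h1 : S.badd a b = (m.1 * m'.1) 1 := by
    rw [badd, ← hm]
    show m.1 b = m.1 (m'.1 1)
    rw [hb]
  have h2 : S.badd (S.badd a b) c = (m.1 * m'.1) c := by
    rw [h1, S.badd_of_mem (mul_mem m.2 m'.2)]
  rw [h2, badd, ← hm]
  show m.1 (m'.1 c) = m.1 (S.badd b c)
  rw [badd, ← hm']

lemma one_badd (a : ↥S.permGroup) : S.badd 1 a = a := by
  have : ((1 : Function.End ↥S.permGroup)) 1 = (1 : ↥S.permGroup) := rfl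
  calc S.badd 1 a = S.badd ((1 : Function.End ↥S.permGroup) 1) a := by rw [this]
    _ = (1 : Function.End ↥S.permGroup) a := S.badd_of_mem (one_mem _) a
    _ = a := rfl

lemma bneg_badd (a : ↥S.permGroup) : S.badd (S.bneg a) a = 1 := by
  set m := S.evE.symm a with hm
  obtain ⟨hmem, hmul, hmul'⟩ := Classical.choose_spec (S.Mon_inv m.2)
  set m' := Classical.choose (S.Mon_inv m.2) with hm'
  have ha : m.1 1 = a := S.evE_symm_spec a
  calc S.badd (S.bneg a) a = S.badd (m' 1) a := rfl
    _ = m' a := S.badd_of_mem hmem a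
    _ = m' (m.1 1) := by rw [ha]
    _ = (m' * m.1) 1 := rfl
    _ = 1 := congrFun hmul' 1

/-- The natural abelian additive structure on `𝒢(X,r)` of a finite solution. -/
noncomputable instance : Zero ↥S.permGroup := ⟨(1 : ↥S.permGroup)⟩
noncomputable instance : Add ↥S.permGroup := ⟨S.badd⟩
noncomputable instance : Neg ↥S.permGroup := ⟨S.bneg⟩

noncomputable instance : AddCommGroup ↥S.permGroup where
  add_assoc := S.badd_assoc
  zero_add := S.one_badd
  add_zero := fun a => by
    show S.badd a 1 = a
    rw [S.badd_comm]; exact S.one_badd a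
  add_comm := S.badd_comm
  neg_add_cancel := S.bneg_badd
  nsmul := nsmulRec
  zsmul := zsmulRec

lemma bzero_def : (0 : ↥S.permGroup) = 1 := rfl

lemma badd_def (a b : ↥S.permGroup) : a + b = S.badd a b := rfl

lemma mul_sigma_eq_add (h : ↥S.permGroup) (y : X) :
    h * S.σg y = h + S.σg (((h : Equiv.Perm X)) y) := by
  have h1 : S.Rm (((h : Equiv.Perm X)) y) 1 = S.σg (((h : Equiv.Perm X)) y) := by
    rw [Rm_apply, one_mul]
    simp
  calc h * S.σg y = S.Rm (((h : Equiv.Perm X)) y) h := by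
        rw [Rm_apply]
        congr 2
        exact (Equiv.Perm.inv_apply_self _ _).symm
    _ = S.badd (S.Rm (((h : Equiv.Perm X)) y) 1) h := (S.badd_of_mem (S.Rm_mem_Mon _) h).symm
    _ = S.badd (S.σg (((h : Equiv.Perm X)) y)) h := by rw [h1]
    _ = h + S.σg (((h : Equiv.Perm X)) y) := S.badd_comm _ _

end YBE
namespace YBE

variable {X : Type u} (S : YBE X) [Finite X]

/-- The lambda maps of the natural brace structure on `𝒢(X,r)`. -/
noncomputable def blam (a x : ↥S.permGroup) : ↥S.permGroup := -a + a * x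

lemma blam_sigma (a : ↥S.permGroup) (y : X) :
    S.blam a (S.σg y) = S.σg (((a : Equiv.Perm X)) y) := by
  rw [blam, S.mul_sigma_eq_add a y, neg_add_cancel_left]

lemma mul_eq_add_blam (a x : ↥S.permGroup) : a * x = a + S.blam a x := by
  rw [blam, add_neg_cancel_left]

lemma blam_one (a : ↥S.permGroup) : S.blam a 1 = 1 := by
  have : S.blam a 1 = -a + a := by rw [blam, mul_one]
  rw [this, neg_add_cancel, S.bzero_def]

lemma one_blam (x : ↥S.permGroup) : S.blam 1 x = x := by
  have h1 : (1 : ↥S.permGroup) = 0 := rfl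
  rw [blam, one_mul, h1, neg_zero, zero_add]

/-- Additive induction: the `σ_x` generate the additive group `(𝒢(X,r), +)`. -/
lemma add_induction (A : Set ↥S.permGroup) (h1 : (1 : ↥S.permGroup) ∈ A)
    (hadd : ∀ b ∈ A, ∀ c ∈ A, b + c ∈ A) (hs : ∀ z : X, S.σg z ∈ A) :
    ∀ g : ↥S.permGroup, g ∈ A := by
  intro g
  obtain ⟨m, hm, hev⟩ := S.ev_surj g
  rw [← hev]
  clear hev
  induction hm using Submonoid.closure_induction with
  | mem x hx =>
    obtain ⟨z, rfl⟩ := hx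
    have : S.Rm z 1 = S.σg z := by rw [Rm_apply, one_mul]; simp
    rw [this]; exact hs z
  | one => exact h1
  | mul x y hx hy ihx ihy =>
    have : (x * y) (1 : ↥S.permGroup) = x 1 + y 1 := by
      show x (y 1) = x 1 + y 1
      have := S.badd_of_mem hx (y 1)
      rw [← this]; rfl
    rw [this]; exact hadd _ ihx _ ihy

lemma blam_add (a b c : ↥S.permGroup) :
    S.blam a (b + c) = S.blam a b + S.blam a c := by
  set A : Set ↥S.permGroup := {b | ∀ c, S.blam a (b + c) = S.blam a b + S.blam a c} with hA
  have h1 : (1 : ↥S.permGroup) ∈ A := by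
    intro c
    have hz : (1 : ↥S.permGroup) = 0 := rfl
    rw [hz, zero_add, ← hz, S.blam_one, hz, zero_add]
  have hs : ∀ z : X, S.σg z ∈ A := by
    intro z c
    have hRz : S.σg z + c = c * S.σg (((c : Equiv.Perm X))⁻¹ z) := by
      have h2 : S.Rm z (1 : ↥S.permGroup) = S.σg z := by rw [Rm_apply, one_mul]; simp
      calc S.σg z + c = S.badd (S.σg z) c := rfl
        _ = S.badd (S.Rm z 1) c := by rw [h2]
        _ = S.Rm z c := S.badd_of_mem (S.Rm_mem_Mon z) c
        _ = c * S.σg (((c : Equiv.Perm X))⁻¹ z) := by rw [Rm_apply]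
    set y := ((c : Equiv.Perm X))⁻¹ z with hy
    have hacy : ((((a * c) : ↥S.permGroup) : Equiv.Perm X)) y = ((a : Equiv.Perm X)) z := by
      rw [Subgroup.coe_mul, Equiv.Perm.mul_apply, hy, Equiv.Perm.apply_inv_self]
    calc S.blam a (S.σg z + c) = S.blam a (c * S.σg y) := by rw [hRz]
      _ = -a + a * (c * S.σg y) := rfl
      _ = -a + (a * c) * S.σg y := by rw [mul_assoc]
      _ = -a + ((a * c) + S.σg (((((a * c) : ↥S.permGroup) : Equiv.Perm X)) y)) := by
          rw [S.mul_sigma_eq_add (a * c) y]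
      _ = (-a + (a * c)) + S.σg (((((a * c) : ↥S.permGroup) : Equiv.Perm X)) y) := by
          rw [add_assoc]
      _ = S.blam a c + S.σg (((a : Equiv.Perm X)) z) := by rw [hacy]; rfl
      _ = S.σg (((a : Equiv.Perm X)) z) + S.blam a c := add_comm _ _
      _ = S.blam a (S.σg z) + S.blam a c := by rw [S.blam_sigma]
  have haddA : ∀ b ∈ A, ∀ b' ∈ A, b + b' ∈ A := by
    intro b hb b' hb' c
    calc S.blam a ((b + b') + c) = S.blam a (b + (b' + c)) := by rw [add_assoc]
      _ = S.blam a b + S.blam a (b' + c) := hb _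
      _ = S.blam a b + (S.blam a b' + S.blam a c) := by rw [hb' c]
      _ = (S.blam a b + S.blam a b') + S.blam a c := by rw [add_assoc]
      _ = S.blam a (b + b') + S.blam a c := by rw [← hb b']
  exact S.add_induction A h1 haddA hs b c

/-- `blam a` as an additive homomorphism. -/
noncomputable def blamHom (a : ↥S.permGroup) : ↥S.permGroup →+ ↥S.permGroup :=
  AddMonoidHom.mk' (S.blam a) (S.blam_add a)

lemma blam_mul (a b x : ↥S.permGroup) :
    S.blam (a * b) x = S.blam a (S.blam b x) := by
  have h1 : a * (b * x) = a + (S.blam a b + S.blam a (S.blam b x)) := by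
    rw [S.mul_eq_add_blam a (b * x), S.mul_eq_add_blam b x, S.blam_add]
  have h2 : a * (b * x) = a + (S.blam a b + S.blam (a * b) x) := by
    rw [← mul_assoc, S.mul_eq_add_blam (a * b) x, S.mul_eq_add_blam a b, add_assoc]
  have := add_left_cancel (add_left_cancel (h1.symm.trans h2))
  exact this.symm

lemma blam_bijective (a : ↥S.permGroup) : Function.Bijective (S.blam a) := by
  have hli : ∀ x, S.blam a⁻¹ (S.blam a x) = x := by
    intro x
    rw [← S.blam_mul, inv_mul_cancel, S.one_blam]
  have hri : ∀ x, S.blam a (S.blam a⁻¹ x) = x := by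
    intro x
    rw [← S.blam_mul, mul_inv_cancel, S.one_blam]
  exact ⟨Function.LeftInverse.injective hli, Function.RightInverse.surjective hri⟩

lemma blam_id_of_sigma_fixed (g : ↥S.permGroup)
    (h : ∀ z : X, S.blam g (S.σg z) = S.σg z) : ∀ x, S.blam g x = x := by
  apply S.add_induction {x | S.blam g x = x} (S.blam_one g)
  · intro b hb c hc
    show S.blam g (b + c) = b + c
    rw [S.blam_add, hb, hc]
  · exact h

lemma add_of_blam_id (a b : ↥S.permGroup) (ha : ∀ x, S.blam a x = x) :
    a + b = a * b := by
  rw [S.mul_eq_add_blam a b, ha b]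

lemma neg_of_blam_id (a : ↥S.permGroup) (ha : ∀ x, S.blam a x = x) :
    -a = a⁻¹ := by
  have h1 : a + a⁻¹ = 0 := by
    rw [S.add_of_blam_id a a⁻¹ ha, mul_inv_cancel]; rfl
  exact neg_eq_of_add_eq_zero_right h1

end YBE
namespace YBE

variable {X : Type u}

/-- Every element of `𝒢(X,r)` descends along a surjective homomorphism of solutions,
giving a surjective group homomorphism `𝒢(X,r) → 𝒢(Z,r')`. -/
theorem retract_pi {Z : Type v} (S : YBE X) (T : YBE Z) (f : X → Z)
    (hf : Function.Surjective f) (hhom : S.IsHom T f) :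
    ∃ π : ↥S.permGroup →* ↥T.permGroup,
      (∀ (g : ↥S.permGroup) (x : X),
        ((π g : Equiv.Perm Z)) (f x) = f (((g : Equiv.Perm X)) x)) ∧
      Function.Surjective π := by
  classical
  have uniq : ∀ h h' : ↥T.permGroup,
      (∀ x, ((h : Equiv.Perm Z)) (f x) = ((h' : Equiv.Perm Z)) (f x)) → h = h' := by
    intro h h' hhh
    apply Subtype.ext
    apply Equiv.ext
    intro z
    obtain ⟨x, rfl⟩ := hf z
    exact hhh x
  have ex : ∀ gp : Equiv.Perm X, gp ∈ Subgroup.closure (Set.range S.σ) →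
      ∃ h : ↥T.permGroup, ∀ x, ((h : Equiv.Perm Z)) (f x) = f (gp x) := by
    intro gp hgp
    induction hgp using Subgroup.closure_induction with
    | mem a ha =>
      obtain ⟨x₀, rfl⟩ := ha
      exact ⟨T.σg (f x₀), fun x => (hhom x₀ x).symm⟩
    | one => exact ⟨1, fun x => rfl⟩
    | mul a b ha hb iha ihb =>
      obtain ⟨h1, hh1⟩ := iha
      obtain ⟨h2, hh2⟩ := ihb
      refine ⟨h1 * h2, fun x => ?_⟩
      calc (((h1 * h2 : ↥T.permGroup) : Equiv.Perm Z)) (f x)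
          = ((h1 : Equiv.Perm Z)) (((h2 : Equiv.Perm Z)) (f x)) := rfl
        _ = ((h1 : Equiv.Perm Z)) (f (b x)) := by rw [hh2]
        _ = f (a (b x)) := hh1 (b x)
    | inv a ha iha =>
      obtain ⟨h1, hh1⟩ := iha
      refine ⟨h1⁻¹, fun x => ?_⟩
      apply ((h1 : Equiv.Perm Z)).injective
      have h2 : ((h1 : Equiv.Perm Z)) ((((h1⁻¹ : ↥T.permGroup)) : Equiv.Perm Z) (f x)) = f x := by
        have : (((h1⁻¹ : ↥T.permGroup)) : Equiv.Perm Z) = ((h1 : Equiv.Perm Z))⁻¹ := rfl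
        rw [this, Equiv.Perm.apply_inv_self]
      rw [h2, hh1 (a⁻¹ x), Equiv.Perm.apply_inv_self]
  have ex' : ∀ g : ↥S.permGroup,
      ∃ h : ↥T.permGroup, ∀ x, ((h : Equiv.Perm Z)) (f x) = f (((g : Equiv.Perm X)) x) :=
    fun g => ex g.1 g.2
  choose Φ hΦ using ex'
  have hmul : ∀ a b : ↥S.permGroup, Φ (a * b) = Φ a * Φ b := by
    intro a b
    apply uniq
    intro x
    rw [hΦ (a * b) x]
    calc f (((a * b : ↥S.permGroup) : Equiv.Perm X) x)
        = f (((a : Equiv.Perm X)) (((b : Equiv.Perm X)) x)) := rfl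
      _ = ((Φ a : Equiv.Perm Z)) (f (((b : Equiv.Perm X)) x)) := (hΦ a _).symm
      _ = ((Φ a : Equiv.Perm Z)) (((Φ b : Equiv.Perm Z)) (f x)) := by rw [hΦ b x]
      _ = (((Φ a * Φ b : ↥T.permGroup) : Equiv.Perm Z)) (f x) := rfl
  have hone : Φ 1 = 1 := by
    apply uniq
    intro x
    rw [hΦ 1 x]
    rfl
  refine ⟨MonoidHom.mk' Φ hmul, fun g x => hΦ g x, ?_⟩
  intro h
  have main : ∀ hp : Equiv.Perm Z, ∀ hhp : hp ∈ Subgroup.closure (Set.range T.σ),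
      ∃ g : ↥S.permGroup, Φ g = ⟨hp, hhp⟩ := by
    intro hp hhp
    induction hhp using Subgroup.closure_induction with
    | mem a ha =>
      obtain ⟨z, rfl⟩ := ha
      obtain ⟨x₀, rfl⟩ := hf z
      refine ⟨S.σg x₀, ?_⟩
      apply uniq
      intro x
      rw [hΦ (S.σg x₀) x]
      exact hhom x₀ x
    | one =>
      refine ⟨1, ?_⟩
      rw [hone]
      rfl
    | mul a b ha hb iha ihb =>
      obtain ⟨ga, hga⟩ := iha
      obtain ⟨gb, hgb⟩ := ihb
      exact ⟨ga * gb, by rw [hmul, hga, hgb]; rfl⟩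
    | inv a ha iha =>
      obtain ⟨ga, hga⟩ := iha
      refine ⟨ga⁻¹, ?_⟩
      have h2 : Φ ga⁻¹ = (Φ ga)⁻¹ :=
        eq_inv_of_mul_eq_one_left (by rw [← hmul, inv_mul_cancel, hone])
      rw [h2, hga]
      rfl
  exact main h.1 h.2

lemma levelLE_succ_of_retract {Z : Type u} {S : YBE X} {T : YBE Z} (h : S.IsRetract T) {n : ℕ}
    (hn : MPLevelLE n Z T) : MPLevelLE (n + 1) X S := ⟨Z, T, h, hn⟩

lemma levelLE_transport {Z : Type u} {S : YBE X} {T : YBE Z} (f : X → Z) (hhom : S.IsHom T f)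
    (hbij : Function.Bijective f) {n : ℕ} (h : MPLevelLE (n + 1) Z T) :
    MPLevelLE (n + 1) X S := by
  obtain ⟨W, Tw, ⟨g, gsurj, ghom, giff⟩, hW⟩ := h
  refine ⟨W, Tw, ⟨g ∘ f, gsurj.comp hbij.surjective, ?_, ?_⟩, hW⟩
  · intro x y
    show g (f (S.σ x y)) = Tw.σ (g (f x)) (g (f y))
    rw [hhom x y, ghom (f x) (f y)]
  · intro x x'
    rw [Function.comp_apply, Function.comp_apply, giff (f x) (f x')]
    constructor
    · intro hT
      apply Equiv.ext
      intro y
      apply hbij.injective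
      rw [hhom x y, hhom x' y, hT]
    · intro hS
      apply Equiv.ext
      intro z
      obtain ⟨y, rfl⟩ := hbij.surjective z
      rw [← hhom x y, ← hhom x' y, hS]

/-- The trivial solution on a point. -/
def punitYBE : YBE (PUnit.{u+1}) := ⟨fun _ => 1, fun _ _ => rfl⟩

lemma levelLE_one_of_const {Z : Type u} (T : YBE Z) (hne : Nonempty Z)
    (hconst : ∀ z z' : Z, T.σ z = T.σ z') : MPLevelLE 1 Z T := by
  refine ⟨PUnit, punitYBE,
    ⟨fun _ => PUnit.unit, fun u => ⟨hne.some, rfl⟩, fun z z' => rfl,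
     fun z z' => ⟨fun _ => hconst z z', fun _ => rfl⟩⟩,
    ⟨⟨PUnit.unit⟩, inferInstance⟩⟩

end YBE
/-- An indecomposable solution of cardinality `p₁p₂p₃` (three distinct
primes) of multipermutation level `3` has `|𝒢(X,r)| > p₁p₂p₃`. -/
theorem statement15 {X : Type u} (p : Fin 3 → ℕ)
    (hp : ∀ i, Nat.Prime (p i)) (hinj : Function.Injective p)
    (S : YBE X) (hcard : Nat.card X = Finset.univ.prod p)
    (hind : S.Indecomposable) (hlev : S.MPLevelExact 3) :
    Finset.univ.prod p < Nat.card ↥S.permGroup := by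
  classical
  obtain ⟨-, hLE3, hmin⟩ := hlev
  have hN3 : Finset.univ.prod p = p 0 * p 1 * p 2 := Fin.prod_univ_three p
  set N := p 0 * p 1 * p 2 with hNdef
  rw [hN3] at hcard ⊢
  have h01 : p 0 ≠ p 1 := fun h => absurd (hinj h) (by decide)
  have h02 : p 0 ≠ p 2 := fun h => absurd (hinj h) (by decide)
  have h12 : p 1 ≠ p 2 := fun h => absurd (hinj h) (by decide)
  have hsqfN : Squarefree N := by
    rw [hNdef, Nat.squarefree_mul_iff]
    refine ⟨?_, ?_, (hp 2).squarefree⟩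
    · exact Nat.Coprime.mul ((Nat.coprime_primes (hp 0) (hp 2)).mpr h02)
        ((Nat.coprime_primes (hp 1) (hp 2)).mpr h12)
    · rw [Nat.squarefree_mul_iff]
      exact ⟨(Nat.coprime_primes (hp 0) (hp 1)).mpr h01, (hp 0).squarefree, (hp 1).squarefree⟩
  have hNne : N ≠ 0 := hsqfN.ne_zero
  have hXfin : Finite X := ((Nat.card_ne_zero).mp (by rw [hcard]; exact hNne)).2
  have hXne : Nonempty X := ((Nat.card_ne_zero).mp (by rw [hcard]; exact hNne)).1
  haveI := hXfin
  haveI := hXne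
  haveI hGfin : Finite ↥S.permGroup := inferInstance
  -- the permutation group has at least N elements
  have hle : N ≤ Nat.card ↥S.permGroup := by
    obtain ⟨x₀⟩ := hXne
    have hsurj : Function.Surjective (fun g : ↥S.permGroup => ((g : Equiv.Perm X)) x₀) := by
      intro y
      obtain ⟨g, hg, hgx⟩ := hind x₀ y
      exact ⟨⟨g, hg⟩, hgx⟩
    have := Nat.card_le_card_of_surjective _ hsurj
    rw [hcard] at this
    exact this
  by_contra hcon
  push_neg at hcon
  have hG1card : Nat.card ↥S.permGroup = N := le_antisymm hcon hle
  -- unfold the multipermutation level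
  obtain ⟨Z, T, hret, hLE2⟩ := hLE3
  obtain ⟨f, fsurj, fhom, fiff⟩ := hret
  haveI hZfin : Finite Z := Finite.of_surjective f fsurj
  haveI hZne : Nonempty Z := Nonempty.map f hXne
  obtain ⟨W, Tw, hret2, hLE1⟩ := hLE2
  obtain ⟨f₂, f2surj, f2hom, f2iff⟩ := hret2
  haveI hWfin : Finite W := Finite.of_surjective f₂ f2surj
  haveI hWne : Nonempty W := Nonempty.map f₂ hZne
  -- minimality consequences
  have hnotLE2 : ¬ YBE.MPLevelLE 2 X S := fun h => by
    have := hmin 2 (by norm_num) h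
    omega
  have hnotLE1Z : ¬ YBE.MPLevelLE 1 Z T := fun h =>
    hnotLE2 (YBE.levelLE_succ_of_retract ⟨f, fsurj, fhom, fiff⟩ h)
  have hnotLE0W : ¬ (Nonempty W ∧ Subsingleton W) := fun h =>
    hnotLE1Z (YBE.levelLE_succ_of_retract ⟨f₂, f2surj, f2hom, f2iff⟩ h)
  have hWnontriv : Nontrivial W :=
    not_subsingleton_iff_nontrivial.mp (fun hsub => hnotLE0W ⟨hWne, hsub⟩)
  -- descent homomorphisms
  obtain ⟨π₁, hπ₁eq, hπ₁surj⟩ := YBE.retract_pi S T f fsurj fhom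
  obtain ⟨π₂, hπ₂eq, hπ₂surj⟩ := YBE.retract_pi T Tw f₂ f2surj f2hom
  -- 𝒢(Z) is abelian
  have hsqG : Squarefree (Nat.card ↥S.permGroup) := by rw [hG1card]; exact hsqfN
  have hblamcomm : ∀ a b x : ↥S.permGroup, S.blam a (S.blam b x) = S.blam b (S.blam a x) :=
    fun a b x => addEndo_comm hsqG (S.blamHom a) (S.blamHom b) x
  have habelZ : ∀ a b : ↥T.permGroup, a * b = b * a := by
    have hgen : ∀ u ∈ Set.range T.σ, ∀ v ∈ Set.range T.σ, Commute u v := by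
      rintro _ ⟨z₁, rfl⟩ _ ⟨z₂, rfl⟩
      obtain ⟨x₁, rfl⟩ := fsurj z₁
      obtain ⟨x₂, rfl⟩ := fsurj z₂
      show T.σ (f x₁) * T.σ (f x₂) = T.σ (f x₂) * T.σ (f x₁)
      apply Equiv.ext
      intro u
      obtain ⟨x, rfl⟩ := fsurj u
      have h3 : S.blam (S.σg x₁ * S.σg x₂) (S.σg x) = S.blam (S.σg x₂ * S.σg x₁) (S.σg x) := by
        rw [S.blam_mul, S.blam_mul, hblamcomm]
      rw [S.blam_sigma, S.blam_sigma] at h3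
      have h4 : S.σ ((((S.σg x₁ * S.σg x₂ : ↥S.permGroup) : Equiv.Perm X)) x)
          = S.σ ((((S.σg x₂ * S.σg x₁ : ↥S.permGroup) : Equiv.Perm X)) x) :=
        congrArg Subtype.val h3
      have h5 : ((S.σg x₁ * S.σg x₂ : ↥S.permGroup) : Equiv.Perm X) x = S.σ x₁ (S.σ x₂ x) := rfl
      have h6 : ((S.σg x₂ * S.σg x₁ : ↥S.permGroup) : Equiv.Perm X) x = S.σ x₂ (S.σ x₁ x) := rfl
      rw [h5, h6] at h4
      have hf5 : f (S.σ x₁ (S.σ x₂ x)) = f (S.σ x₂ (S.σ x₁ x)) := (fiff _ _).mpr h4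
      calc (T.σ (f x₁) * T.σ (f x₂)) (f x)
          = T.σ (f x₁) (T.σ (f x₂) (f x)) := Equiv.Perm.mul_apply _ _ _
        _ = f (S.σ x₁ (S.σ x₂ x)) := by rw [← fhom x₂ x, ← fhom x₁ (S.σ x₂ x)]
        _ = f (S.σ x₂ (S.σ x₁ x)) := hf5
        _ = T.σ (f x₂) (T.σ (f x₁) (f x)) := by rw [← fhom x₁ x, ← fhom x₂ (S.σ x₁ x)]
        _ = (T.σ (f x₂) * T.σ (f x₁)) (f x) := (Equiv.Perm.mul_apply _ _ _).symm
    intro a b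
    exact Subtype.ext (closure_commute hgen a.1 a.2 b.1 b.2)
  -- transitivity
  have htransZ : ∀ z z' : Z, ∃ h : ↥T.permGroup, ((h : Equiv.Perm Z)) z = z' := by
    intro z z'
    obtain ⟨x, rfl⟩ := fsurj z
    obtain ⟨x', rfl⟩ := fsurj z'
    obtain ⟨g, hg, hgx⟩ := hind x x'
    refine ⟨π₁ ⟨g, hg⟩, ?_⟩
    rw [hπ₁eq ⟨g, hg⟩ x]
    exact congrArg f hgx
  have htransW : ∀ w w' : W, ∃ h : ↥Tw.permGroup, ((h : Equiv.Perm W)) w = w' := by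
    intro w w'
    obtain ⟨z, rfl⟩ := f2surj w
    obtain ⟨z', rfl⟩ := f2surj w'
    obtain ⟨h, hh⟩ := htransZ z z'
    refine ⟨π₂ h, ?_⟩
    rw [hπ₂eq h z]
    exact congrArg f₂ hh
  have habelW : ∀ a b : ↥Tw.permGroup, a * b = b * a := by
    intro a b
    obtain ⟨a', rfl⟩ := hπ₂surj a
    obtain ⟨b', rfl⟩ := hπ₂surj b
    rw [← map_mul, ← map_mul, habelZ]
  -- regularity
  have hcardZ : Nat.card ↥T.permGroup = Nat.card Z :=
    card_eq_of_abelian_transitive T.permGroup habelZ htransZ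
  have hcardW : Nat.card ↥Tw.permGroup = Nat.card W :=
    card_eq_of_abelian_transitive Tw.permGroup habelW htransW
  -- divisibility
  have hdvd1 : Nat.card ↥T.permGroup ∣ Nat.card ↥S.permGroup := by
    have h1 : Nat.card ↥T.permGroup = Nat.card (↥S.permGroup ⧸ π₁.ker) :=
      (Nat.card_congr (QuotientGroup.quotientKerEquivOfSurjective π₁ hπ₁surj).toEquiv).symm
    rw [h1]
    exact Subgroup.card_quotient_dvd_card _
  have hdvd2 : Nat.card ↥Tw.permGroup ∣ Nat.card ↥T.permGroup := by
    have h1 : Nat.card ↥Tw.permGroup = Nat.card (↥T.permGroup ⧸ π₂.ker) :=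
      (Nat.card_congr (QuotientGroup.quotientKerEquivOfSurjective π₂ hπ₂surj).toEquiv).symm
    rw [h1]
    exact Subgroup.card_quotient_dvd_card _
  -- strictness
  have hZneq : Nat.card Z ≠ N := by
    intro h
    have hbij : Function.Bijective f :=
      (Nat.bijective_iff_surjective_and_card f).mpr ⟨fsurj, by rw [hcard, h]⟩
    exact hnotLE2 (YBE.levelLE_transport f fhom hbij
      ⟨W, Tw, ⟨f₂, f2surj, f2hom, f2iff⟩, hLE1⟩)
  have hWneqZ : Nat.card W ≠ Nat.card Z := by
    intro h
    have hbij : Function.Bijective f₂ :=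
      (Nat.bijective_iff_surjective_and_card f₂).mpr ⟨f2surj, h.symm⟩
    exact hnotLE1Z (YBE.levelLE_transport f₂ f2hom hbij hLE1)
  have hW2 : 2 ≤ Nat.card W := Finite.one_lt_card_iff_nontrivial.mpr hWnontriv
  have hsqZ : Squarefree (Nat.card ↥T.permGroup) :=
    Squarefree.squarefree_of_dvd hdvd1 hsqG
  -- |W| is prime
  have hprimeW : (Nat.card W).Prime := by
    apply three_primes_chain (hp 0) (hp 1) (hp 2)
      (a := Nat.card ↥T.permGroup) (b := Nat.card W)
    · rw [← hcardW]; exact hdvd2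
    · rw [← hNdef, ← hG1card]; exact hdvd1
    · rw [← hNdef]; exact hsqfN
    · exact hW2
    · rw [hcardZ]; exact hWneqZ
    · rw [hcardZ, ← hNdef]; exact hZneq
  -- the kernel of π₂ is the kernel of λ on 𝒢(Z)
  set n := Nat.card W with hn
  set K₂ := π₂.ker with hK2
  have hkerchar : ∀ h : ↥T.permGroup, h ∈ K₂ ↔ ∀ x : ↥T.permGroup, T.blam h x = x := by
    intro h
    constructor
    · intro hk
      rw [MonoidHom.mem_ker] at hk
      apply T.blam_id_of_sigma_fixed
      intro z
      have h2 := hπ₂eq h z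
      rw [hk] at h2
      have h1 : f₂ (((h : Equiv.Perm Z)) z) = f₂ z := by simpa using h2.symm
      have h3 : T.σg (((h : Equiv.Perm Z)) z) = T.σg z := Subtype.ext ((f2iff _ _).mp h1)
      rw [T.blam_sigma, h3]
    · intro hb
      rw [MonoidHom.mem_ker]
      apply Subtype.ext
      apply Equiv.ext
      intro w
      obtain ⟨z, rfl⟩ := f2surj w
      have h3 : T.σg (((h : Equiv.Perm Z)) z) = T.σg z := by
        rw [← T.blam_sigma]
        exact hb _
      have h1 : f₂ (((h : Equiv.Perm Z)) z) = f₂ z :=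
        (f2iff _ _).mpr (congrArg Subtype.val h3)
      rw [hπ₂eq h z, h1]
      rfl
  have hcardquot : Nat.card ↥T.permGroup = n * Nat.card ↥K₂ := by
    rw [Subgroup.card_eq_card_quotient_mul_card_subgroup K₂]
    congr 1
    rw [Nat.card_congr (QuotientGroup.quotientKerEquivOfSurjective π₂ hπ₂surj).toEquiv, hcardW]
  set t := Nat.card ↥K₂ with ht
  have hco : Nat.Coprime t n := by
    have h1 : Squarefree (n * t) := by rw [← hcardquot]; exact hsqZ
    exact ((Nat.squarefree_mul_iff.mp h1).1).symm
  have htpos : 0 < t := Nat.card_pos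
  -- there is an element outside K₂
  obtain ⟨h₀, hh₀⟩ : ∃ h₀ : ↥T.permGroup, h₀ ∉ K₂ := by
    by_contra hno
    push_neg at hno
    have htop : K₂ = ⊤ := (Subgroup.eq_top_iff' K₂).mpr hno
    have h1 : t = Nat.card ↥T.permGroup := by
      rw [ht, htop]
      exact Nat.card_congr Subgroup.topEquiv.toEquiv
    have h2 : t = n * t := h1.trans hcardquot
    have h4 : 2 * t ≤ n * t := Nat.mul_le_mul_right t hW2
    rw [← h2] at h4
    omega
  -- the permutation φ = λ_{h₀}
  let φ : Equiv.Perm ↥T.permGroup := Equiv.ofBijective (T.blam h₀) (T.blam_bijective h₀)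
  haveI hFactn : Fact n.Prime := ⟨hprimeW⟩
  have hφdef : ∀ x, φ x = T.blam h₀ x := fun _ => rfl
  have hφpow : ∀ (k : ℕ) (x : ↥T.permGroup), (φ ^ k) x = T.blam (h₀ ^ k) x := by
    intro k
    induction k with
    | zero =>
      intro x
      rw [pow_zero, pow_zero]
      exact (T.one_blam x).symm
    | succ k ih =>
      intro x
      rw [pow_succ', pow_succ', Equiv.Perm.mul_apply, ih, T.blam_mul]
      rfl
  have hh₀n : h₀ ^ n ∈ K₂ := by
    rw [hK2, MonoidHom.mem_ker, map_pow]
    have h1 : (π₂ h₀) ^ Nat.card ↥Tw.permGroup = 1 := pow_card_eq_one'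
    rwa [hcardW] at h1
  have hφn : φ ^ n = 1 := by
    apply Equiv.ext
    intro x
    rw [hφpow n x, ((hkerchar _).mp hh₀n) x]
    rfl
  have hφne : φ ≠ 1 := by
    intro h
    apply hh₀
    apply (hkerchar h₀).mpr
    intro x
    have h2 : φ x = x := by rw [h]; rfl
    exact h2
  have hordφ : orderOf φ = n := orderOf_eq_prime hφn hφne
  have hΓp : IsPGroup n ↥(Subgroup.zpowers φ) :=
    IsPGroup.of_card (by rw [Nat.card_zpowers, hordφ, pow_one])
  have hcong := hΓp.card_modEq_card_fixedPoints ↥T.permGroup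
  have hfixiff : ∀ x : ↥T.permGroup,
      x ∈ MulAction.fixedPoints ↥(Subgroup.zpowers φ) ↥T.permGroup ↔ T.blam h₀ x = x := by
    intro x
    rw [MulAction.mem_fixedPoints]
    constructor
    · intro hfix
      exact hfix ⟨φ, Subgroup.mem_zpowers φ⟩
    · intro hfix γ
      obtain ⟨k, hk⟩ := Subgroup.mem_zpowers_iff.mp γ.2
      have h1 : ((γ : Equiv.Perm ↥T.permGroup)) x = x := by
        rw [← hk]
        exact perm_zpow_fixed φ x hfix k
      exact h1
  let F : AddSubgroup ↥T.permGroup := AddMonoidHom.eqLocus (T.blamHom h₀) (AddMonoidHom.id _)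
  have hFmem : ∀ x : ↥T.permGroup, x ∈ F ↔ T.blam h₀ x = x := fun _ => Iff.rfl
  have hcardFfix :
      Nat.card ↥(MulAction.fixedPoints ↥(Subgroup.zpowers φ) ↥T.permGroup) = Nat.card ↥F :=
    Nat.card_congr (Equiv.subtypeEquivRight (fun x => by rw [hfixiff x, hFmem x]))
  have hndvdH : n ∣ Nat.card ↥T.permGroup := ⟨Nat.card ↥K₂, hcardquot⟩
  have hndvdF : n ∣ Nat.card ↥F := by
    have h1 : Nat.card ↥F ≡ 0 [MOD n] := by
      calc Nat.card ↥F ≡ Nat.card ↥T.permGroup [MOD n] := by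
            rw [← hcardFfix]; exact hcong.symm
        _ ≡ 0 [MOD n] := (Nat.modEq_zero_iff_dvd).mpr hndvdH
    exact (Nat.modEq_zero_iff_dvd).mp h1
  have hK2blam : ∀ k : ↥T.permGroup, k ∈ K₂ → T.blam h₀ k = k := by
    intro k hk
    have hbk : ∀ x, T.blam k x = x := (hkerchar k).mp hk
    have h1 : h₀ * k = h₀ + T.blam h₀ k := T.mul_eq_add_blam h₀ k
    have h2 : k * h₀ = k + h₀ := by rw [T.mul_eq_add_blam k h₀, hbk]
    have h3 : h₀ + T.blam h₀ k = h₀ + k := by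
      rw [← h1, habelZ h₀ k, h2, add_comm]
    exact add_left_cancel h3
  let K₂' : AddSubgroup ↥T.permGroup :=
    { carrier := K₂
      add_mem' := by
        intro a b ha hb
        have h1 : a + b = a * b := T.add_of_blam_id a b ((hkerchar a).mp ha)
        show a + b ∈ (K₂ : Set ↥T.permGroup)
        rw [h1]
        exact mul_mem ha hb
      zero_mem' := by
        show (0 : ↥T.permGroup) ∈ (K₂ : Set ↥T.permGroup)
        rw [T.bzero_def]
        exact one_mem K₂
      neg_mem' := by
        intro a ha
        show -a ∈ (K₂ : Set ↥T.permGroup)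
        rw [T.neg_of_blam_id a ((hkerchar a).mp ha)]
        exact inv_mem ha }
  have hK2'card : Nat.card ↥K₂' = t := by
    rw [ht]
    exact Nat.card_congr (Equiv.subtypeEquivRight (fun x => Iff.rfl))
  have hK2'le : K₂' ≤ F := fun k hk => hK2blam k hk
  have htdvdF : t ∣ Nat.card ↥F := by
    rw [← hK2'card]
    exact AddSubgroup.card_dvd_of_le hK2'le
  have htn : t * n ∣ Nat.card ↥F := hco.mul_dvd_of_dvd_of_dvd htdvdF hndvdF
  have hFdvd : Nat.card ↥F ∣ Nat.card ↥T.permGroup := by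
    have h1 := AddSubgroup.card_dvd_of_le (le_top : F ≤ ⊤)
    rwa [Nat.card_congr AddSubgroup.topEquiv.toEquiv] at h1
  have hFeq : Nat.card ↥F = Nat.card ↥T.permGroup :=
    Nat.dvd_antisymm hFdvd (by rw [hcardquot, mul_comm]; exact htn)
  have hFtop : F = ⊤ := AddSubgroup.eq_top_of_card_eq F hFeq
  apply hh₀
  apply (hkerchar h₀).mpr
  intro x
  have hx : x ∈ F := by rw [hFtop]; exact AddSubgroup.mem_top x
  exact hx
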